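/- For any prime p and any n ≥ 2, there is no p-valent regular Cayley map on the dicyclic group Dic_n: there exist no subset X of Dic_n with 1 ∉ X, X closed under inverses, X generating Dic_n, and |X| = p, and no permutation q of X acting as a single cycle of length p, such that the Cayley map CM(Dic_n, X, q) is regular. -/

import Mathlib

/-- A Cayley map `CM(G, X, q)`: a finite subset `X` of `G` with `1 ∉ X`,
closed under inverses, generating `G`, together with a permutation `q` of `X`
acting on `X` as a single cycle of length `|X|`. -/
structure CayleyMapData (G : Type*) [Group G] where
  X : Finset G
  one_not_mem : (1 : G) ∉ X
  inv_mem : ∀ x ∈ X, x⁻¹ ∈ X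
  gen : Subgroup.closure (X : Set G) = ⊤
  q : Equiv.Perm {x : G // x ∈ X}
  single_cycle : ∀ x y : {x : G // x ∈ X}, ∃ k : ℕ, (q ^ k) x = y

namespace CayleyMapData

variable {G : Type*} [Group G] (M : CayleyMapData G)

/-- The rotation `R(g, x) = (g, q(x))` on the arc set `G × X`. -/
def rotation : Equiv.Perm (G × {x : G // x ∈ M.X}) :=
  (Equiv.refl G).prodCongr M.q

/-- The arc-reversing involution `L(g, x) = (g·x, x⁻¹)` on the arc set `G × X`. -/
def invol : Equiv.Perm (G × {x : G // x ∈ M.X}) where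
  toFun d := (d.1 * d.2.1, ⟨(d.2.1 : G)⁻¹, M.inv_mem _ d.2.2⟩)
  invFun d := (d.1 * d.2.1, ⟨(d.2.1 : G)⁻¹, M.inv_mem _ d.2.2⟩)
  left_inv := by rintro ⟨g, x, hx⟩; simp
  right_inv := by rintro ⟨g, x, hx⟩; simp

/-- The Cayley map is regular: the monodromy group `⟨R, L⟩` acts sharply
transitively on the arc set. -/
def IsRegular : Prop :=
  ∀ d d' : G × {x : G // x ∈ M.X},
    ∃! m : Subgroup.closure ({M.rotation, M.invol} :
        Set (Equiv.Perm (G × {x : G // x ∈ M.X}))),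
      (m : Equiv.Perm (G × {x : G // x ∈ M.X})) d = d'

/-- Balanced: `(q x)⁻¹ = q (x⁻¹)` for all `x ∈ X`. -/
def IsBalanced : Prop :=
  ∀ x : {x : G // x ∈ M.X},
    ((M.q x : G))⁻¹ = (M.q ⟨(x : G)⁻¹, M.inv_mem _ x.2⟩ : G)

/-- Anti-balanced: `(q x)⁻¹ = q⁻¹ (x⁻¹)` for all `x ∈ X`. -/
def IsAntiBalanced : Prop :=
  ∀ x : {x : G // x ∈ M.X},
    ((M.q x : G))⁻¹ = (M.q⁻¹ ⟨(x : G)⁻¹, M.inv_mem _ x.2⟩ : G)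

end CayleyMapData


namespace NoPrimeValentAux

section SharpTrans

variable {α : Type*} (Mon : Subgroup (Equiv.Perm α))
variable (hreg : ∀ d d' : α, ∃! m : Mon, (m : Equiv.Perm α) d = d')
variable (base : α)

/-- the unique monodromy element sending `base` to `d`. -/
noncomputable def stMu (d : α) : Mon := (hreg base d).choose

lemma stMu_spec (d : α) : ((stMu Mon hreg base d : Mon) : Equiv.Perm α) base = d :=
  (hreg base d).choose_spec.1

lemma stMu_uniq (d : α) (m : Mon) (h : (m : Equiv.Perm α) base = d) :
    m = stMu Mon hreg base d :=
  (hreg base d).choose_spec.2 m h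

/-- the centralizing map determined by target `w`. -/
noncomputable def stC (w : α) : α → α := fun d => ((stMu Mon hreg base d : Mon) : Equiv.Perm α) w

lemma stC_base (w : α) : stC Mon hreg base w base = w := by
  have h1 : (1 : Mon) = stMu Mon hreg base base := stMu_uniq Mon hreg base base 1 rfl
  unfold stC
  rw [← h1]
  rfl

lemma stC_comm (w : α) (m : Mon) (d : α) :
    stC Mon hreg base w ((m : Equiv.Perm α) d) = (m : Equiv.Perm α) (stC Mon hreg base w d) := by
  have h1 : m * stMu Mon hreg base d = stMu Mon hreg base ((m : Equiv.Perm α) d) := by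
    apply stMu_uniq
    simp only [Subgroup.coe_mul, Equiv.Perm.mul_apply, stMu_spec]
  unfold stC
  rw [← h1]
  rfl

lemma stC_iter_comm (w : α) (k : ℕ) (m : Mon) (d : α) :
    (stC Mon hreg base w)^[k] ((m : Equiv.Perm α) d)
      = (m : Equiv.Perm α) ((stC Mon hreg base w)^[k] d) := by
  induction k generalizing d with
  | zero => rfl
  | succ k ih =>
    rw [Function.iterate_succ_apply, Function.iterate_succ_apply, stC_comm, ih]

lemma stC_iter_id (w : α) (k : ℕ) (hfix : (stC Mon hreg base w)^[k] base = base) (d : α) :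
    (stC Mon hreg base w)^[k] d = d := by
  conv_lhs => rw [← stMu_spec Mon hreg base d]
  rw [stC_iter_comm, hfix, stMu_spec]

end SharpTrans

section Period

open scoped Classical

variable {G : Type*} [Group G] (M : CayleyMapData G)

lemma pow_apply_split (i j : ℕ) (h : i ≤ j) (x : {x : G // x ∈ M.X}) :
    (M.q ^ j) x = (M.q ^ i) ((M.q ^ (j - i)) x) := by
  rw [← Equiv.Perm.mul_apply, ← pow_add, Nat.add_sub_cancel' h]

lemma q_exists_pos_fix (z0 : {x : G // x ∈ M.X}) :
    ∃ t, 0 < t ∧ (M.q ^ t) z0 = z0 := by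
  have hlt : Fintype.card {x : G // x ∈ M.X} < Fintype.card (Fin (M.X.card + 1)) := by
    simp only [Fintype.card_coe, Fintype.card_fin]
    omega
  obtain ⟨i, j, hne, heq⟩ :=
    Fintype.exists_ne_map_eq_of_card_lt (fun k : Fin (M.X.card + 1) => (M.q ^ (k : ℕ)) z0) hlt
  have hvne : (i : ℕ) ≠ (j : ℕ) := fun hc => hne (Fin.ext hc)
  rcases Nat.lt_or_ge (i : ℕ) (j : ℕ) with h | h
  · refine ⟨(j : ℕ) - (i : ℕ), by omega, ?_⟩
    rw [pow_apply_split M (i : ℕ) (j : ℕ) (Nat.le_of_lt h) z0] at heq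
    exact Equiv.injective _ heq.symm
  · refine ⟨(i : ℕ) - (j : ℕ), by omega, ?_⟩
    rw [pow_apply_split M (j : ℕ) (i : ℕ) h z0] at heq
    exact Equiv.injective _ heq

/-- minimal period of the base point under `q`. -/
noncomputable def qper (z0 : {x : G // x ∈ M.X}) : ℕ := Nat.find (q_exists_pos_fix M z0)

lemma qper_pos (z0 : {x : G // x ∈ M.X}) : 0 < qper M z0 :=
  (Nat.find_spec (q_exists_pos_fix M z0)).1

lemma qper_fix (z0 : {x : G // x ∈ M.X}) : (M.q ^ qper M z0) z0 = z0 :=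
  (Nat.find_spec (q_exists_pos_fix M z0)).2

lemma qper_min (z0 : {x : G // x ∈ M.X}) (t : ℕ) (ht : 0 < t) (ht' : t < qper M z0) :
    (M.q ^ t) z0 ≠ z0 := by
  intro hc
  exact Nat.find_min (q_exists_pos_fix M z0) ht' ⟨ht, hc⟩

lemma q_pow_mod (z0 : {x : G // x ∈ M.X}) (k : ℕ) :
    (M.q ^ k) z0 = (M.q ^ (k % qper M z0)) z0 := by
  induction k using Nat.strong_induction_on with
  | _ k ih =>
    rcases Nat.lt_or_ge k (qper M z0) with h | h
    · rw [Nat.mod_eq_of_lt h]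
    · have h2 : (M.q ^ k) z0 = (M.q ^ (k - qper M z0)) z0 := by
        rw [pow_apply_split M (k - qper M z0) k (by omega) z0]
        have h3 : k - (k - qper M z0) = qper M z0 := by omega
        rw [h3, qper_fix]
      rw [h2, ih _ (by have := qper_pos M z0; omega)]
      congr 1
      conv_rhs => rw [show k = (k - qper M z0) + qper M z0 by omega]
      rw [Nat.add_mod_right]

lemma q_inj_below (z0 : {x : G // x ∈ M.X}) (i j : ℕ) (hij : i ≤ j) (hj : j < qper M z0)
    (h : (M.q ^ i) z0 = (M.q ^ j) z0) : i = j := by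
  by_contra hne
  rw [pow_apply_split M i j hij z0] at h
  have h2 := Equiv.injective _ h
  exact qper_min M z0 (j - i) (by omega) (by omega) h2.symm

lemma qper_eq_card (z0 : {x : G // x ∈ M.X}) : qper M z0 = M.X.card := by
  have hbij : Function.Bijective (fun k : Fin (qper M z0) => (M.q ^ (k : ℕ)) z0) := by
    constructor
    · intro i j h
      rcases le_total (i : ℕ) (j : ℕ) with h1 | h1
      · exact Fin.ext (q_inj_below M z0 _ _ h1 j.2 h)
      · exact Fin.ext (q_inj_below M z0 _ _ h1 i.2 h.symm).symm
    · intro y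
      obtain ⟨k, hk⟩ := M.single_cycle z0 y
      refine ⟨⟨k % qper M z0, Nat.mod_lt _ (qper_pos M z0)⟩, ?_⟩
      simp only
      rw [← q_pow_mod M z0 k, hk]
  have hc := Fintype.card_of_bijective hbij
  simpa [Fintype.card_coe] using hc

end Period

section Indexing

variable {G : Type*} [Group G] (M : CayleyMapData G)
variable (p : ℕ) [NeZero p] (z0 : {x : G // x ∈ M.X})

/-- enumeration of `X` by `ZMod p`. -/
noncomputable def Efun (k : ZMod p) : {x : G // x ∈ M.X} := (M.q ^ k.val) z0

lemma Efun_zero : Efun M p z0 0 = z0 := by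
  simp [Efun]

lemma qper_eq_p (hcard : M.X.card = p) : qper M z0 = p := by rw [qper_eq_card, hcard]

lemma Efun_add_nat (hcard : M.X.card = p) (k : ZMod p) (j : ℕ) :
    (M.q ^ j) (Efun M p z0 k) = Efun M p z0 (k + (j : ZMod p)) := by
  unfold Efun
  rw [← Equiv.Perm.mul_apply, ← pow_add]
  rw [q_pow_mod M z0 (j + k.val), q_pow_mod M z0 ((k + (j : ZMod p)).val)]
  congr 2
  rw [qper_eq_p M p z0 hcard]
  rw [ZMod.val_add, ZMod.val_natCast]
  conv_lhs => rw [Nat.add_comm j k.val, Nat.add_mod, Nat.mod_eq_of_lt (ZMod.val_lt k)]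
  exact (Nat.mod_mod_of_dvd _ dvd_rfl).symm

lemma Efun_bijective (hcard : M.X.card = p) : Function.Bijective (Efun M p z0) := by
  constructor
  · intro k k' h
    unfold Efun at h
    have h1 : k.val = k'.val := by
      rcases le_total k.val k'.val with h2 | h2
      · exact q_inj_below M z0 _ _ h2 (by rw [qper_eq_p M p z0 hcard]; exact ZMod.val_lt k') h
      · exact (q_inj_below M z0 _ _ h2 (by rw [qper_eq_p M p z0 hcard]; exact ZMod.val_lt k)
          h.symm).symm
    exact ZMod.val_injective p h1
  · intro y
    obtain ⟨k, hk⟩ := M.single_cycle z0 y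
    refine ⟨(k : ZMod p), ?_⟩
    unfold Efun
    rw [ZMod.val_natCast, ← qper_eq_p M p z0 hcard, ← q_pow_mod, hk]

/-- enumeration as an equivalence. -/
noncomputable def Ee (hcard : M.X.card = p) : ZMod p ≃ {x : G // x ∈ M.X} :=
  Equiv.ofBijective _ (Efun_bijective M p z0 hcard)

lemma Ee_apply (hcard : M.X.card = p) (k : ZMod p) :
    Ee M p z0 hcard k = Efun M p z0 k := rfl

/-- the inverse map on the subtype. -/
def invT (x : {x : G // x ∈ M.X}) : {x : G // x ∈ M.X} :=
  ⟨(x : G)⁻¹, M.inv_mem _ x.2⟩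

lemma invT_invT (x : {x : G // x ∈ M.X}) : invT M (invT M x) = x := by
  simp [invT]

/-- the inverse permutation on indices. -/
noncomputable def iot (hcard : M.X.card = p) (k : ZMod p) : ZMod p :=
  (Ee M p z0 hcard).symm (invT M (Efun M p z0 k))

lemma Efun_iot (hcard : M.X.card = p) (k : ZMod p) :
    Efun M p z0 (iot M p z0 hcard k) = invT M (Efun M p z0 k) := by
  unfold iot
  rw [← Ee_apply M p z0 hcard, Equiv.apply_symm_apply]

lemma Efun_iot_coe (hcard : M.X.card = p) (k : ZMod p) :
    (Efun M p z0 (iot M p z0 hcard k) : G) = (Efun M p z0 k : G)⁻¹ := by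
  rw [Efun_iot]; rfl

lemma iot_iot (hcard : M.X.card = p) (k : ZMod p) :
    iot M p z0 hcard (iot M p z0 hcard k) = k := by
  have h := Efun_iot M p z0 hcard (iot M p z0 hcard k)
  rw [Efun_iot M p z0 hcard k, invT_invT] at h
  exact (Efun_bijective M p z0 hcard).1 h

lemma iot_inj (hcard : M.X.card = p) : Function.Injective (iot M p z0 hcard) := by
  intro a b h
  have h2 := congrArg (iot M p z0 hcard) h
  rwa [iot_iot, iot_iot] at h2

lemma iot_zero (hcard : M.X.card = p) (hz0 : (z0 : G)⁻¹ = z0) : iot M p z0 hcard 0 = 0 := by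
  apply (Efun_bijective M p z0 hcard).1
  rw [Efun_iot, Efun_zero]
  exact Subtype.ext hz0

end Indexing

section Machinery

variable {G : Type*} [Group G] (M : CayleyMapData G)

/-- the monodromy group. -/
def monM : Subgroup (Equiv.Perm (G × {x : G // x ∈ M.X})) :=
  Subgroup.closure {M.rotation, M.invol}

lemma rot_mem : M.rotation ∈ monM M :=
  Subgroup.subset_closure (Set.mem_insert _ _)

lemma invol_mem : M.invol ∈ monM M :=
  Subgroup.subset_closure (Set.mem_insert_of_mem _ rfl)

lemma rotation_apply (g : G) (x : {x : G // x ∈ M.X}) :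
    M.rotation (g, x) = (g, M.q x) := rfl

lemma invol_apply (g : G) (x : {x : G // x ∈ M.X}) :
    M.invol (g, x) = (g * (x : G), invT M x) := rfl

lemma rot_pow_apply (j : ℕ) (g : G) (x : {x : G // x ∈ M.X}) :
    (M.rotation ^ j) (g, x) = (g, (M.q ^ j) x) := by
  induction j generalizing x with
  | zero => rfl
  | succ j ih =>
    rw [pow_succ, pow_succ, Equiv.Perm.mul_apply, Equiv.Perm.mul_apply]
    rw [rotation_apply, ih (M.q x)]

/-- left translations. -/
def lpe (g : G) : Equiv.Perm (G × {x : G // x ∈ M.X}) :=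
  Equiv.prodCongr (Equiv.mulLeft g) (Equiv.refl _)

lemma lpe_apply (g h : G) (x : {x : G // x ∈ M.X}) : lpe M g (h, x) = (g * h, x) := rfl

lemma monM_le_centralizer : monM M ≤ Subgroup.centralizer (Set.range (lpe M)) := by
  apply (Subgroup.closure_le _).2
  rintro s hs
  show s ∈ Subgroup.centralizer (Set.range (lpe M))
  rw [Subgroup.mem_centralizer_iff]
  rintro h ⟨g, rfl⟩
  rcases hs with hs | hs
  · subst hs
    ext d
    rcases d with ⟨u, x⟩
    simp only [Equiv.Perm.mul_apply, lpe_apply, rotation_apply]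
    rfl
  · rw [Set.mem_singleton_iff] at hs
    subst hs
    ext d
    rcases d with ⟨u, x⟩
    simp only [Equiv.Perm.mul_apply, lpe_apply, invol_apply]
    rw [mul_assoc]
    rfl

lemma monM_comm_lpe (m : monM M) (g : G) (d : G × {x : G // x ∈ M.X}) :
    (m : Equiv.Perm _) (lpe M g d) = lpe M g ((m : Equiv.Perm _) d) := by
  have h := monM_le_centralizer M m.2
  rw [Subgroup.mem_centralizer_iff] at h
  have h2 : lpe M g * (m : Equiv.Perm _) = (m : Equiv.Perm _) * lpe M g := h (lpe M g) ⟨g, rfl⟩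
  have h3 := congrArg (fun σ : Equiv.Perm (G × {x : G // x ∈ M.X}) => σ d) h2
  simpa only [Equiv.Perm.mul_apply] using h3.symm

variable (p : ℕ) [NeZero p] (z0 : {x : G // x ∈ M.X})

/-- base arc. -/
def baseD : G × {x : G // x ∈ M.X} := ((1 : G), z0)

/-- the canonical map-automorphism-like function `c`. -/
noncomputable def cC (hreg : M.IsRegular) :
    G × {x : G // x ∈ M.X} → G × {x : G // x ∈ M.X} :=
  stC (monM M) hreg (baseD M z0) (M.rotation (baseD M z0))

variable (hreg : M.IsRegular)

lemma cC_comm (m : monM M) (d : G × {x : G // x ∈ M.X}) :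
    cC M z0 hreg ((m : Equiv.Perm _) d) = (m : Equiv.Perm _) (cC M z0 hreg d) :=
  stC_comm _ hreg _ _ m d

lemma cC_iter_comm (k : ℕ) (m : monM M) (d : G × {x : G // x ∈ M.X}) :
    (cC M z0 hreg)^[k] ((m : Equiv.Perm _) d)
      = (m : Equiv.Perm _) ((cC M z0 hreg)^[k] d) :=
  stC_iter_comm _ hreg _ _ k m d

lemma cC_base : cC M z0 hreg (baseD M z0) = M.rotation (baseD M z0) :=
  stC_base _ hreg _ _

lemma cC_rot_pow (j : ℕ) (d : G × {x : G // x ∈ M.X}) :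
    cC M z0 hreg ((M.rotation ^ j) d) = (M.rotation ^ j) (cC M z0 hreg d) := by
  have h := cC_comm M z0 hreg ((⟨M.rotation, rot_mem M⟩ : monM M) ^ j) d
  rwa [SubgroupClass.coe_pow] at h

lemma cC_invol (d : G × {x : G // x ∈ M.X}) :
    cC M z0 hreg (M.invol d) = M.invol (cC M z0 hreg d) :=
  cC_comm M z0 hreg ⟨M.invol, invol_mem M⟩ d

/-- first component of `c`. -/
noncomputable def gam (g : G) : G := (cC M z0 hreg (g, Efun M p z0 0)).1

variable (hcard : M.X.card = p)

/-- index of second component of `c`. -/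
noncomputable def psi0 (g : G) : ZMod p :=
  (Ee M p z0 hcard).symm (cC M z0 hreg (g, Efun M p z0 0)).2

lemma cC_snd (g : G) :
    (cC M z0 hreg (g, Efun M p z0 0)).2 = Efun M p z0 (psi0 M p z0 hreg hcard g) := by
  unfold psi0
  exact ((Ee M p z0 hcard).apply_symm_apply _).symm

lemma natCast_val (k : ZMod p) : ((k.val : ℕ) : ZMod p) = k := ZMod.natCast_rightInverse k

lemma c_eval (g : G) (k : ZMod p) :
    cC M z0 hreg (g, Efun M p z0 k)
      = (gam M p z0 hreg g, Efun M p z0 (psi0 M p z0 hreg hcard g + k)) := by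
  have h1 : (g, Efun M p z0 k) = (M.rotation ^ k.val) (g, Efun M p z0 0) := by
    rw [rot_pow_apply, Efun_add_nat M p z0 hcard 0 k.val, natCast_val, zero_add]
  rw [h1, cC_rot_pow]
  have h2 : cC M z0 hreg (g, Efun M p z0 0)
      = (gam M p z0 hreg g, Efun M p z0 (psi0 M p z0 hreg hcard g)) :=
    Prod.ext rfl (cC_snd M p z0 hreg hcard g)
  rw [h2, rot_pow_apply, Efun_add_nat M p z0 hcard _ k.val, natCast_val]

lemma gam_A (g : G) (k : ZMod p) :
    gam M p z0 hreg (g * (Efun M p z0 k : G))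
      = gam M p z0 hreg g * (Efun M p z0 (psi0 M p z0 hreg hcard g + k) : G) := by
  have h := cC_invol M z0 hreg (g, Efun M p z0 k)
  rw [invol_apply, ← Efun_iot M p z0 hcard, c_eval M p z0 hreg hcard,
    c_eval M p z0 hreg hcard, invol_apply] at h
  exact congrArg Prod.fst h

lemma psi_B (g : G) (k : ZMod p) :
    psi0 M p z0 hreg hcard (g * (Efun M p z0 k : G)) + iot M p z0 hcard k
      = iot M p z0 hcard (psi0 M p z0 hreg hcard g + k) := by
  have h := cC_invol M z0 hreg (g, Efun M p z0 k)
  rw [invol_apply, ← Efun_iot M p z0 hcard, c_eval M p z0 hreg hcard,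
    c_eval M p z0 hreg hcard, invol_apply, ← Efun_iot M p z0 hcard] at h
  have h2 := congrArg Prod.snd h
  exact (Efun_bijective M p z0 hcard).1 h2

end Machinery

section Machinery2

variable {G : Type*} [Group G] (M : CayleyMapData G)
variable (p : ℕ) [NeZero p] (z0 : {x : G // x ∈ M.X})
variable (hreg : M.IsRegular)

lemma base_eq : baseD M z0 = ((1 : G), Efun M p z0 0) := by
  rw [Efun_zero]
  rfl

lemma cC_one_E0 :
    cC M z0 hreg ((1 : G), Efun M p z0 0) = ((1 : G), M.q z0) := by
  rw [← base_eq, cC_base]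
  rfl

lemma q_z0_eq (hcard : M.X.card = p) : M.q z0 = Efun M p z0 1 := by
  have h := Efun_add_nat M p z0 hcard 0 1
  rw [pow_one, Efun_zero, zero_add] at h
  rw [h, Nat.cast_one]

lemma gam_one : gam M p z0 hreg (1 : G) = 1 := by
  unfold gam
  rw [cC_one_E0]

lemma psi0_one (hcard : M.X.card = p) : psi0 M p z0 hreg hcard (1 : G) = 1 := by
  unfold psi0
  rw [cC_one_E0]
  have h : (M.q z0 : {x : G // x ∈ M.X}) = Ee M p z0 hcard 1 := by
    rw [Ee_apply, ← q_z0_eq M p z0 hcard]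
  simp only [h, Equiv.symm_apply_apply]

/-- first component of iterates of `c`. -/
noncomputable def Gm (m : ℕ) (g : G) : G :=
  ((cC M z0 hreg)^[m] (g, Efun M p z0 0)).1

/-- index of second component of iterates of `c`. -/
noncomputable def Pm (hcard : M.X.card = p) (m : ℕ) (g : G) : ZMod p :=
  (Ee M p z0 hcard).symm ((cC M z0 hreg)^[m] (g, Efun M p z0 0)).2

lemma Gm_zero (g : G) : Gm M p z0 hreg 0 g = g := rfl

lemma Pm_zero (hcard : M.X.card = p) (g : G) : Pm M p z0 hreg hcard 0 g = 0 := by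
  unfold Pm
  rw [Function.iterate_zero_apply]
  exact (Ee M p z0 hcard).symm_apply_apply 0

lemma c_iter_eval (hcard : M.X.card = p) (m : ℕ) (g : G) (k : ZMod p) :
    (cC M z0 hreg)^[m] (g, Efun M p z0 k)
      = (Gm M p z0 hreg m g, Efun M p z0 (Pm M p z0 hreg hcard m g + k)) := by
  induction m generalizing k with
  | zero =>
    rw [Function.iterate_zero_apply, Gm_zero, Pm_zero, zero_add]
  | succ m ih =>
    have key : ∀ k' : ZMod p, (cC M z0 hreg)^[m + 1] (g, Efun M p z0 k')
        = (gam M p z0 hreg (Gm M p z0 hreg m g),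
           Efun M p z0 (psi0 M p z0 hreg hcard (Gm M p z0 hreg m g)
             + (Pm M p z0 hreg hcard m g + k'))) := by
      intro k'
      rw [Function.iterate_succ_apply', ih k', c_eval M p z0 hreg hcard]
    have hG : Gm M p z0 hreg (m + 1) g
        = gam M p z0 hreg (Gm M p z0 hreg m g) := by
      show ((cC M z0 hreg)^[m + 1] (g, Efun M p z0 0)).1 = _
      rw [key 0]
    have hP : Pm M p z0 hreg hcard (m + 1) g
        = psi0 M p z0 hreg hcard (Gm M p z0 hreg m g) + Pm M p z0 hreg hcard m g := by
      show (Ee M p z0 hcard).symm ((cC M z0 hreg)^[m + 1] (g, Efun M p z0 0)).2 = _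
      rw [key 0, add_zero]
      exact (Ee M p z0 hcard).symm_apply_apply _
    rw [key k, hG, hP, add_assoc]

lemma Gm_succ (hcard : M.X.card = p) (m : ℕ) (g : G) :
    Gm M p z0 hreg (m + 1) g = gam M p z0 hreg (Gm M p z0 hreg m g) := by
  show ((cC M z0 hreg)^[m + 1] (g, Efun M p z0 0)).1 = _
  rw [Function.iterate_succ_apply', c_iter_eval M p z0 hreg hcard m g 0,
    c_eval M p z0 hreg hcard]

lemma Pm_succ (hcard : M.X.card = p) (m : ℕ) (g : G) :
    Pm M p z0 hreg hcard (m + 1) g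
      = psi0 M p z0 hreg hcard (Gm M p z0 hreg m g) + Pm M p z0 hreg hcard m g := by
  show (Ee M p z0 hcard).symm ((cC M z0 hreg)^[m + 1] (g, Efun M p z0 0)).2 = _
  rw [Function.iterate_succ_apply', c_iter_eval M p z0 hreg hcard m g 0,
    c_eval M p z0 hreg hcard, add_zero]
  exact (Ee M p z0 hcard).symm_apply_apply _

lemma Gm_one (hcard : M.X.card = p) (m : ℕ) : Gm M p z0 hreg m (1 : G) = 1 := by
  induction m with
  | zero => rfl
  | succ m ih => rw [Gm_succ M p z0 hreg hcard, ih, gam_one]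

lemma Pm_one (hcard : M.X.card = p) (m : ℕ) :
    Pm M p z0 hreg hcard m (1 : G) = (m : ZMod p) := by
  induction m with
  | zero => rw [Pm_zero, Nat.cast_zero]
  | succ m ih =>
    rw [Pm_succ M p z0 hreg hcard, Gm_one M p z0 hreg hcard, psi0_one M p z0 hreg hcard, ih]
    push_cast
    ring

lemma c_p_fix (hcard : M.X.card = p) :
    (cC M z0 hreg)^[p] (baseD M z0) = baseD M z0 := by
  rw [base_eq M p z0, c_iter_eval M p z0 hreg hcard, Gm_one M p z0 hreg hcard,
    Pm_one M p z0 hreg hcard, ZMod.natCast_self, zero_add]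

lemma c_p_id (hcard : M.X.card = p) (d : G × {x : G // x ∈ M.X}) :
    (cC M z0 hreg)^[p] d = d :=
  stC_iter_id _ hreg _ _ p (c_p_fix M p z0 hreg hcard) d

lemma c_p_mul_id (hcard : M.X.card = p) (j : ℕ) (d : G × {x : G // x ∈ M.X}) :
    (cC M z0 hreg)^[p * j] d = d := by
  induction j generalizing d with
  | zero => rfl
  | succ j ih =>
    rw [Nat.mul_succ, Function.iterate_add_apply, ih, c_p_id M p z0 hreg hcard]

lemma c_iter_mod (hcard : M.X.card = p) (a : ℕ) (d : G × {x : G // x ∈ M.X}) :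
    (cC M z0 hreg)^[a] d = (cC M z0 hreg)^[a % p] d := by
  conv_lhs => rw [show a = a % p + p * (a / p) from (Nat.mod_add_div a p).symm]
  rw [Function.iterate_add_apply, c_p_mul_id M p z0 hreg hcard]

lemma lpe_base (g : G) : lpe M g (baseD M z0) = (g, Efun M p z0 0) := by
  rw [base_eq M p z0]
  show (g * 1, Efun M p z0 0) = (g, Efun M p z0 0)
  rw [mul_one]

lemma cC_lpe (hcard : M.X.card = p) (g : G) (d : G × {x : G // x ∈ M.X}) :
    cC M z0 hreg (lpe M g d)
      = lpe M (gam M p z0 hreg g)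
          ((cC M z0 hreg)^[(psi0 M p z0 hreg hcard g).val] d) := by
  set m := stMu (monM M) hreg (baseD M z0) d with hm
  have hd : (m : Equiv.Perm _) (baseD M z0) = d := stMu_spec (monM M) hreg (baseD M z0) d
  have lhs : cC M z0 hreg (lpe M g d)
      = (m : Equiv.Perm _) (gam M p z0 hreg g, Efun M p z0 (psi0 M p z0 hreg hcard g)) := by
    rw [← hd, ← monM_comm_lpe, cC_comm, lpe_base M p z0,
      c_eval M p z0 hreg hcard, add_zero]
  have rhs : lpe M (gam M p z0 hreg g)
        ((cC M z0 hreg)^[(psi0 M p z0 hreg hcard g).val] d)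
      = (m : Equiv.Perm _) (gam M p z0 hreg g, Efun M p z0 (psi0 M p z0 hreg hcard g)) := by
    rw [← hd, cC_iter_comm, ← monM_comm_lpe]
    congr 1
    rw [base_eq M p z0, c_iter_eval M p z0 hreg hcard, Gm_one M p z0 hreg hcard,
      Pm_one M p z0 hreg hcard, natCast_val, add_zero]
    show ((gam M p z0 hreg g) * 1, Efun M p z0 (psi0 M p z0 hreg hcard g)) = _
    rw [mul_one]
  rw [lhs, rhs]

lemma cC_iter_lpe (hcard : M.X.card = p) (m : ℕ) (g : G) (d : G × {x : G // x ∈ M.X}) :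
    (cC M z0 hreg)^[m] (lpe M g d)
      = lpe M (Gm M p z0 hreg m g)
          ((cC M z0 hreg)^[(Pm M p z0 hreg hcard m g).val] d) := by
  induction m generalizing d with
  | zero =>
    rw [Function.iterate_zero_apply, Gm_zero, Pm_zero, ZMod.val_zero,
      Function.iterate_zero_apply]
  | succ m ih =>
    rw [Function.iterate_succ_apply', ih d, cC_lpe M p z0 hreg hcard,
      ← Function.iterate_add_apply, Gm_succ M p z0 hreg hcard, Pm_succ M p z0 hreg hcard]
    congr 1
    rw [c_iter_mod M p z0 hreg hcard, ZMod.val_add]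

lemma Pm_mul (hcard : M.X.card = p) (m : ℕ) (g h : G) :
    Pm M p z0 hreg hcard m (g * h)
      = Pm M p z0 hreg hcard (Pm M p z0 hreg hcard m g).val h := by
  have h1 : (cC M z0 hreg)^[m] (g * h, Efun M p z0 0)
      = (Gm M p z0 hreg m (g * h),
          Efun M p z0 (Pm M p z0 hreg hcard m (g * h) + 0)) :=
    c_iter_eval M p z0 hreg hcard m (g * h) 0
  have h2 : (cC M z0 hreg)^[m] (g * h, Efun M p z0 0)
      = (Gm M p z0 hreg m g * Gm M p z0 hreg (Pm M p z0 hreg hcard m g).val h,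
          Efun M p z0 (Pm M p z0 hreg hcard (Pm M p z0 hreg hcard m g).val h + 0)) := by
    have h3 := cC_iter_lpe M p z0 hreg hcard m g (h, Efun M p z0 0)
    rw [show (lpe M g ((h, Efun M p z0 0) : G × {x : G // x ∈ M.X}))
        = ((g * h, Efun M p z0 0) : G × {x : G // x ∈ M.X}) from rfl] at h3
    rw [h3, c_iter_eval M p z0 hreg hcard]
    rfl
  rw [h1] at h2
  have h3 := congrArg Prod.snd h2
  have h4 := (Efun_bijective M p z0 hcard).1 h3
  rwa [add_zero, add_zero] at h4

lemma gam_E (hcard : M.X.card = p) (j : ZMod p) :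
    gam M p z0 hreg (Efun M p z0 j : G) = (Efun M p z0 (j + 1) : G) := by
  have h := gam_A M p z0 hreg hcard 1 j
  rw [one_mul, gam_one, one_mul, psi0_one M p z0 hreg hcard] at h
  rw [h, add_comm]

lemma psi0_E (hcard : M.X.card = p) (j : ZMod p) :
    psi0 M p z0 hreg hcard (Efun M p z0 j : G)
      = iot M p z0 hcard (j + 1) - iot M p z0 hcard j := by
  have h := psi_B M p z0 hreg hcard 1 j
  rw [one_mul, psi0_one M p z0 hreg hcard, add_comm (1 : ZMod p) j] at h
  rw [← h]
  ring

lemma Gm_E (hcard : M.X.card = p) (m : ℕ) (j : ZMod p) :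
    Gm M p z0 hreg m (Efun M p z0 j : G) = (Efun M p z0 (j + (m : ZMod p)) : G) := by
  induction m with
  | zero => rw [Gm_zero, Nat.cast_zero, add_zero]
  | succ m ih =>
    rw [Gm_succ M p z0 hreg hcard, ih, gam_E M p z0 hreg hcard]
    push_cast
    ring_nf

lemma Pm_E (hcard : M.X.card = p) (m : ℕ) (j : ZMod p) :
    Pm M p z0 hreg hcard m (Efun M p z0 j : G)
      = iot M p z0 hcard (j + (m : ZMod p)) - iot M p z0 hcard j := by
  induction m with
  | zero => rw [Pm_zero, Nat.cast_zero, add_zero, sub_self]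
  | succ m ih =>
    rw [Pm_succ M p z0 hreg hcard, ih, Gm_E M p z0 hreg hcard,
      psi0_E M p z0 hreg hcard]
    push_cast
    ring_nf

end Machinery2

section Combinatorics

lemma combinat (p : ℕ) [NeZero p] (hp : p.Prime) (hp2 : p ≠ 2) (u : ZMod p → ZMod p)
    (uu : ∀ k, u (u k) = k) (l : ZMod p)
    (hC1 : ∀ k, u (l + (u (l + k) - u l)) - u l = u k) :
    u l = l := by
  haveI : Fact p.Prime := ⟨hp⟩
  have uinj : Function.Injective u := by
    intro a b h
    have h2 := congrArg u h
    rwa [uu, uu] at h2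
  set m : ZMod p := l - u l with hm
  -- step D1
  have D1 : ∀ j : ZMod p, u (u j + m) = u (j - l) + u l := by
    intro j
    have h := hC1 (j - l)
    rw [show l + (j - l) = j by ring] at h
    rw [show l + (u j - u l) = u j + (l - u l) by ring] at h
    rw [← hm] at h
    exact sub_eq_iff_eq_add.mp h
  set A : ZMod p → ZMod p := fun k => u (k - l) + u l with hA
  have hAinj : Function.Injective A := by
    intro a b h
    simp only [hA] at h
    have h2 := add_right_cancel h
    have h3 := uinj h2
    exact sub_left_injective h3
  -- step D2
  have D2 : ∀ y : ZMod p, u (u y - m) = u (y - u l) + l := by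
    intro y
    have h1 : A (u (u y - m)) = y := by
      have h := D1 (u (u y - m))
      rw [uu, show u y - m + m = u y by ring, uu] at h
      exact h.symm
    have h2 : A (u (y - u l) + l) = y := by
      simp only [hA]
      rw [show u (y - u l) + l - l = u (y - u l) by ring, uu]
      ring
    exact hAinj (h1.trans h2.symm)
  -- step D3
  have D3 : ∀ k : ZMod p, u (u k + (m + m)) = u (k - (l + u l)) + (l + u l) := by
    intro k
    have hy : u (A k) = u k + m := by
      have h := congrArg u (D1 k)
      rw [uu] at h
      exact h.symm
    have h1 := D1 (A k)
    rw [hy] at h1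
    have h2 : A k - l = u (k - l) - m := by
      simp only [hA, hm]
      ring
    rw [h2, D2 (k - l)] at h1
    rw [show u k + m + m = u k + (m + m) by ring] at h1
    rw [h1]
    rw [show k - l - u l = k - (l + u l) by ring]
    ring
  -- step D4
  have D4 : ∀ k : ZMod p, u (u k + (m + m) + (m + m)) = k := by
    intro k
    set s : ZMod p := l + u l with hs
    have hyB : u (u (k - s) + s) = u k + (m + m) := by
      have h := congrArg u (D3 k)
      rw [uu] at h
      exact h.symm
    have h1 := D3 (u (k - s) + s)
    rw [hyB] at h1
    rw [show u (k - s) + s - s = u (k - s) by ring, uu] at h1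
    rw [h1]
    ring
  -- conclude 4m = 0
  have h4 : u 0 + (m + m) + (m + m) = u 0 := by
    apply uinj
    rw [D4 0, uu]
  have h5 : (4 : ZMod p) * m = 0 := by
    linear_combination h4
  have h7 : (4 : ZMod p) ≠ 0 := by
    intro hc
    have h8 : ((4 : ℕ) : ZMod p) = 0 := by exact_mod_cast hc
    have h9 : p ∣ 4 := (ZMod.natCast_eq_zero_iff 4 p).mp h8
    have h10 : p ∣ 2 ^ 2 := by norm_num at h9 ⊢; exact h9
    have h11 : p ∣ 2 := hp.dvd_of_dvd_pow h10
    have h12 : p = 2 := (Nat.prime_dvd_prime_iff_eq hp Nat.prime_two).mp h11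
    exact hp2 h12
  have hm0 : m = 0 := by
    rcases mul_eq_zero.mp h5 with h | h
    · exact absurd h h7
    · exact h
  have h13 : l - u l = 0 := by rw [← hm]; exact hm0
  exact (sub_eq_zero.mp h13).symm

end Combinatorics

section MainGeneric

variable {G : Type*} [Group G]

lemma mainGeneric (M : CayleyMapData G) (p : ℕ) (hp : p.Prime)
    (hp2 : p ≠ 2) (hreg : M.IsRegular) (hcard : M.X.card = p)
    (z0 : {x : G // x ∈ M.X}) (hz0 : ((z0 : G))⁻¹ = (z0 : G))
    (x : G) (hx : x ∈ M.X) (hxx : x * x = (z0 : G)) : False := by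
  haveI : NeZero p := ⟨hp.pos.ne'⟩
  obtain ⟨l, hl⟩ := (Efun_bijective M p z0 hcard).2 ⟨x, hx⟩
  have hlc : (Efun M p z0 l : G) = x := by rw [hl]
  have hPmx : ∀ k : ZMod p, Pm M p z0 hreg hcard k.val x
      = iot M p z0 hcard (l + k) - iot M p z0 hcard l := by
    intro k
    rw [← hlc, Pm_E M p z0 hreg hcard, natCast_val]
  have hz0E : (z0 : G) = (Efun M p z0 0 : G) := by rw [Efun_zero]
  have hPmz : ∀ k : ZMod p, Pm M p z0 hreg hcard k.val (z0 : G) = iot M p z0 hcard k := by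
    intro k
    rw [hz0E, Pm_E M p z0 hreg hcard, natCast_val, zero_add,
      iot_zero M p z0 hcard hz0, sub_zero]
  have hC1 : ∀ k : ZMod p,
      iot M p z0 hcard (l + (iot M p z0 hcard (l + k) - iot M p z0 hcard l))
        - iot M p z0 hcard l = iot M p z0 hcard k := by
    intro k
    have h1 := Pm_mul M p z0 hreg hcard k.val x x
    rw [hxx, hPmz k, hPmx k,
      hPmx (iot M p z0 hcard (l + k) - iot M p z0 hcard l)] at h1
    exact h1.symm
  have hul := combinat p hp hp2 (iot M p z0 hcard) (iot_iot M p z0 hcard) l hC1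
  have h2 : Efun M p z0 (iot M p z0 hcard l) = Efun M p z0 l := congrArg _ hul
  rw [Efun_iot M p z0 hcard] at h2
  have h3 : (Efun M p z0 l : G)⁻¹ = (Efun M p z0 l : G) := congrArg Subtype.val h2
  rw [hlc] at h3
  have h4 : (z0 : G) = 1 := by
    rw [← hxx]
    nth_rewrite 2 [← h3]
    exact mul_inv_cancel x
  have h5 : (1 : G) ∈ M.X := by rw [← h4]; exact z0.2
  exact M.one_not_mem h5

end MainGeneric

section QuaternionFacts

open QuaternionGroup

lemma inv_a' {n : ℕ} (i : ZMod (2 * n)) : (QuaternionGroup.a i)⁻¹ = QuaternionGroup.a (-i) := rfl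

lemma unique_inv (n : ℕ) (hn : 1 ≤ n) (g : QuaternionGroup n) (h : g * g = 1) :
    g = 1 ∨ g = QuaternionGroup.a (n : ZMod (2 * n)) := by
  haveI : NeZero (2 * n) := ⟨by omega⟩
  cases g with
  | a i =>
    rw [a_mul_a, one_def] at h
    have h' : i + i = 0 := by injection h
    have hv := congrArg ZMod.val h'
    rw [ZMod.val_add, ZMod.val_zero] at hv
    have hvlt : i.val < 2 * n := ZMod.val_lt i
    have hdvd : 2 * n ∣ i.val + i.val := Nat.dvd_of_mod_eq_zero hv
    obtain ⟨c, hc⟩ := hdvd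
    have hc2 : c < 2 := by
      by_contra hge
      push_neg at hge
      have h4 : 2 * n * 2 ≤ 2 * n * c := Nat.mul_le_mul_left _ hge
      omega
    have hcast : ((i.val : ℕ) : ZMod (2 * n)) = i := ZMod.natCast_rightInverse i
    interval_cases c
    · left
      have hv0 : i.val = 0 := by omega
      rw [one_def]
      congr 1
      rw [← hcast, hv0, Nat.cast_zero]
    · right
      have hvn : i.val = n := by omega
      congr 1
      rw [← hcast, hvn]
  | xa i =>
    rw [xa_mul_xa, add_sub_cancel_right, one_def] at h
    have h' : ((n : ℕ) : ZMod (2 * n)) = 0 := by injection h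
    have hdvd : 2 * n ∣ n := (ZMod.natCast_eq_zero_iff n (2 * n)).mp h'
    have := Nat.le_of_dvd (by omega) hdvd
    omega

lemma an_ne_one (n : ℕ) (hn : 1 ≤ n) :
    (QuaternionGroup.a (n : ZMod (2 * n)) : QuaternionGroup n) ≠ 1 := by
  intro h
  rw [one_def] at h
  have h' : ((n : ℕ) : ZMod (2 * n)) = 0 := by injection h
  have hdvd : 2 * n ∣ n := (ZMod.natCast_eq_zero_iff n (2 * n)).mp h'
  have := Nat.le_of_dvd (by omega) hdvd
  omega

/-- the cyclic subgroup `⟨a⟩`. -/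
def Arange (n : ℕ) : Subgroup (QuaternionGroup n) where
  carrier := Set.range QuaternionGroup.a
  mul_mem' := by
    rintro _ _ ⟨i, rfl⟩ ⟨j, rfl⟩
    exact ⟨i + j, (a_mul_a i j).symm⟩
  one_mem' := ⟨0, one_def.symm⟩
  inv_mem' := by
    rintro _ ⟨i, rfl⟩
    exact ⟨-i, (inv_a' i).symm⟩

lemma exists_xa {n : ℕ} (M : CayleyMapData (QuaternionGroup n)) :
    ∃ x ∈ M.X, ∃ i, x = QuaternionGroup.xa i := by
  by_contra hcon
  push_neg at hcon
  have hsub : (M.X : Set (QuaternionGroup n)) ⊆ (Arange n : Set (QuaternionGroup n)) := by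
    intro g hg
    cases g with
    | a i => exact ⟨i, rfl⟩
    | xa i => exact absurd rfl (hcon _ hg i)
  have hle : Subgroup.closure (M.X : Set (QuaternionGroup n)) ≤ Arange n :=
    (Subgroup.closure_le _).mpr hsub
  rw [M.gen] at hle
  obtain ⟨i, hi⟩ := hle (Subgroup.mem_top (QuaternionGroup.xa 0))
  cases hi

lemma even_card_aux {G : Type*} [Group G] :
    ∀ (N : ℕ) (s : Finset G), s.card ≤ N → (∀ x ∈ s, x⁻¹ ∈ s) →
      (∀ x ∈ s, x⁻¹ ≠ x) → Even s.card := by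
  intro N
  induction N with
  | zero =>
    intro s hle _ _
    classical
    simp only [Nat.le_zero, Finset.card_eq_zero] at hle
    simp [hle]
  | succ N ih =>
    intro s hle hinv hfix
    classical
    rcases s.eq_empty_or_nonempty with hs | ⟨x, hx⟩
    · simp [hs]
    · have hxi : x⁻¹ ∈ s := hinv x hx
      have hxne : x⁻¹ ≠ x := hfix x hx
      set t := (s.erase x).erase x⁻¹ with ht
      have hxmem : x⁻¹ ∈ s.erase x := Finset.mem_erase.mpr ⟨hxne, hxi⟩
      have hcard1 : (s.erase x).card = s.card - 1 := Finset.card_erase_of_mem hx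
      have hcardt : t.card = s.card - 2 := by
        rw [ht, Finset.card_erase_of_mem hxmem, hcard1]
        omega
      have hspos : 1 ≤ s.card := Finset.card_pos.mpr ⟨x, hx⟩
      have hspos2 : 2 ≤ s.card := by
        have : (s.erase x).card ≥ 1 := Finset.card_pos.mpr ⟨x⁻¹, hxmem⟩
        omega
      have htmem : ∀ y, y ∈ t ↔ (y ∈ s ∧ y ≠ x ∧ y ≠ x⁻¹) := by
        intro y
        rw [ht, Finset.mem_erase, Finset.mem_erase]
        tauto
      have hinvt : ∀ y ∈ t, y⁻¹ ∈ t := by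
        intro y hy
        rw [htmem] at hy ⊢
        obtain ⟨hy1, hy2, hy3⟩ := hy
        refine ⟨hinv y hy1, ?_, ?_⟩
        · intro hc
          exact hy3 (by rw [← hc, inv_inv])
        · intro hc
          exact hy2 (inv_injective hc)
      have hfixt : ∀ y ∈ t, y⁻¹ ≠ y := by
        intro y hy
        exact hfix y ((htmem y).mp hy).1
      have hev := ih t (by omega) hinvt hfixt
      obtain ⟨c, hc⟩ := hev
      exact ⟨c + 1, by omega⟩

lemma exists_self_inv {G : Type*} [Group G] (s : Finset G)
    (hinv : ∀ x ∈ s, x⁻¹ ∈ s) (hodd : ¬ Even s.card) : ∃ x ∈ s, x⁻¹ = x := by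
  by_contra hcon
  push_neg at hcon
  exact hodd (even_card_aux s.card s le_rfl hinv hcon)

lemma card_two_case (n : ℕ) (hn : 2 ≤ n) (M : CayleyMapData (QuaternionGroup n))
    (hcard : M.X.card = 2) : False := by
  obtain ⟨x, y, hxy, hX⟩ := Finset.card_eq_two.mp hcard
  have hxX : x ∈ M.X := by rw [hX]; exact Finset.mem_insert_self _ _
  have hyX : y ∈ M.X := by rw [hX]; simp
  have hx1 : x ≠ 1 := fun h => M.one_not_mem (h ▸ hxX)
  have hy1 : y ≠ 1 := fun h => M.one_not_mem (h ▸ hyX)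
  have hxinv : x⁻¹ = x ∨ x⁻¹ = y := by
    have h := M.inv_mem x hxX
    rw [hX, Finset.mem_insert, Finset.mem_singleton] at h
    exact h
  have main : x⁻¹ = y → False := by
    intro hxy'
    have hsub : (M.X : Set (QuaternionGroup n)) ⊆ (Subgroup.zpowers x : Set _) := by
      intro g hg
      rw [hX] at hg
      simp only [Finset.coe_insert, Finset.coe_singleton, Set.mem_insert_iff,
        Set.mem_singleton_iff] at hg
      rcases hg with rfl | rfl
      · exact Subgroup.mem_zpowers g
      · rw [← hxy']
        exact Subgroup.inv_mem _ (Subgroup.mem_zpowers x)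
    have hle : (⊤ : Subgroup (QuaternionGroup n)) ≤ Subgroup.zpowers x := by
      rw [← M.gen]
      exact (Subgroup.closure_le _).mpr hsub
    obtain ⟨i, hi⟩ := hle (Subgroup.mem_top (QuaternionGroup.a (1 : ZMod (2 * n))))
    obtain ⟨j, hj⟩ := hle (Subgroup.mem_top (QuaternionGroup.xa (0 : ZMod (2 * n))))
    have hcomm : QuaternionGroup.a (1 : ZMod (2 * n)) * QuaternionGroup.xa (0 : ZMod (2 * n))
        = QuaternionGroup.xa (0 : ZMod (2 * n)) * QuaternionGroup.a (1 : ZMod (2 * n)) := by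
      rw [← hi, ← hj, ← zpow_add, ← zpow_add, add_comm]
    rw [QuaternionGroup.a_mul_xa, QuaternionGroup.xa_mul_a, zero_sub, zero_add] at hcomm
    have h2 : (-1 : ZMod (2 * n)) = 1 := by injection hcomm
    have h3 : ((2 : ℕ) : ZMod (2 * n)) = 0 := by
      push_cast
      linear_combination -h2
    have hdvd : 2 * n ∣ 2 := (ZMod.natCast_eq_zero_iff 2 (2 * n)).mp h3
    have := Nat.le_of_dvd (by norm_num) hdvd
    omega
  rcases hxinv with hxx | hxx
  · -- x is an involution; then y must also be
    have hyinv : y⁻¹ = y := by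
      have h := M.inv_mem y hyX
      rw [hX, Finset.mem_insert, Finset.mem_singleton] at h
      rcases h with h | h
      · exact absurd (by rw [← h, inv_inv] : x⁻¹ = y) (fun hc => main hc)
      · exact h
    have hxsq : x * x = 1 := by nth_rewrite 2 [← hxx]; exact mul_inv_cancel x
    have hysq : y * y = 1 := by nth_rewrite 2 [← hyinv]; exact mul_inv_cancel y
    have hx' := (unique_inv n (by omega) x hxsq).resolve_left hx1
    have hy' := (unique_inv n (by omega) y hysq).resolve_left hy1
    exact hxy (hx'.trans hy'.symm)
  · exact main hxx

end QuaternionFacts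

end NoPrimeValentAux

/-- There is no prime-valent regular Cayley map on any dicyclic group
`Dic_n = QuaternionGroup n` (`n ≥ 2`). -/
theorem no_prime_valent_regular_cayley_map_dicyclic
    (p n : ℕ) (hp : p.Prime) (hn : 2 ≤ n) :
    ¬ ∃ M : CayleyMapData (QuaternionGroup n), M.X.card = p ∧ M.IsRegular := by
  rintro ⟨M, hcard, hreg⟩
  by_cases hp2 : p = 2
  · exact NoPrimeValentAux.card_two_case n hn M (by rw [hcard, hp2])
  · have hodd : ¬ Even M.X.card := by
      rw [hcard]
      intro he
      exact hp2 (hp.even_iff.mp he)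
    obtain ⟨z, hzX, hzinv⟩ := NoPrimeValentAux.exists_self_inv M.X M.inv_mem hodd
    have hz1 : z ≠ 1 := fun h => M.one_not_mem (h ▸ hzX)
    have hzz : z * z = 1 := by nth_rewrite 2 [← hzinv]; exact mul_inv_cancel z
    have hz' : z = QuaternionGroup.a ((n : ZMod (2 * n))) :=
      (NoPrimeValentAux.unique_inv n (by omega) z hzz).resolve_left hz1
    obtain ⟨x, hxX, i, hxi⟩ := NoPrimeValentAux.exists_xa M
    have hxx : x * x = z := by
      rw [hxi, hz', QuaternionGroup.xa_mul_xa, add_sub_cancel_right]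
    exact NoPrimeValentAux.mainGeneric M p hp hp2 hreg hcard ⟨z, hzX⟩ hzinv x hxX hxx
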